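/- If p has period q (so p = v^k u with |v| = q, k ≥ 2, u a proper prefix of v, v primitive), and p matches a text t at two positions i < j with j - i ≤ m/2, then q divides j - i. -/
import Mathlib


def Matches {α : Type*} {m : ℕ} (p : Fin m → α) (t : ℕ → α) (i : ℕ) : Prop :=
  ∀ j : Fin m, t (i + (j : ℕ)) = p j

theorem fine_wilf_aux {α : Type*} (m : ℕ) (f : ℕ → α) :
    ∀ n a b, a + b = n → 1 ≤ a → 1 ≤ b → a + b ≤ m →
    (∀ k, k < m → a ≤ k → f k = f (k - a)) →
    (∀ k, k < m → b ≤ k → f k = f (k - b)) →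
    ∀ k, k < m → Nat.gcd a b ≤ k → f k = f (k - Nat.gcd a b) := by
  intro n
  induction n using Nat.strong_induction_on with
  | _ n ih =>
    intro a b hn ha hb hm hfa hfb
    rcases lt_trichotomy a b with h | h | h
    · have key : ∀ k, k < m → b - a ≤ k → f k = f (k - (b - a)) := by
        intro k hk hk2
        by_cases hka : k + a < m
        · have h1 := hfa (k + a) hka (by omega)
          have h2 := hfb (k + a) hka (by omega)
          rw [show k + a - a = k from by omega] at h1
          rw [show k + a - b = k - (b - a) from by omega] at h2
          rw [← h1, h2]
        · by_cases hkb : b ≤ k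
          · have h1 := hfb k hk hkb
            have h2 := hfa (k - b + a) (by omega) (by omega)
            rw [show k - b + a - a = k - b from by omega] at h2
            rw [h1, ← h2, show k - b + a = k - (b - a) from by omega]
          · omega
      have := ih (a + (b - a)) (by omega) a (b - a) rfl ha (by omega) (by omega) hfa key
      rwa [Nat.gcd_sub_self_right (le_of_lt h)] at this
    · subst h
      intro k hk hgk
      rw [Nat.gcd_self] at hgk ⊢
      exact hfa k hk hgk
    · have key : ∀ k, k < m → a - b ≤ k → f k = f (k - (a - b)) := by
        intro k hk hk2
        by_cases hkb : k + b < m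
        · have h1 := hfb (k + b) hkb (by omega)
          have h2 := hfa (k + b) hkb (by omega)
          rw [show k + b - b = k from by omega] at h1
          rw [show k + b - a = k - (a - b) from by omega] at h2
          rw [← h1, h2]
        · by_cases hka : a ≤ k
          · have h1 := hfa k hk hka
            have h2 := hfb (k - a + b) (by omega) (by omega)
            rw [show k - a + b - b = k - a from by omega] at h2
            rw [h1, ← h2, show k - a + b = k - (a - b) from by omega]
          · omega
      have := ih (b + (a - b)) (by omega) b (a - b) rfl hb (by omega) (by omega) hfb key
      rw [Nat.gcd_sub_self_right (le_of_lt h)] at this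
      rwa [Nat.gcd_comm]

/-- Period-divisibility: if `p` has least period `q ≤ m/2` and `p` matches the
text at two positions `i < j` with `j - i ≤ m/2`, then `q` divides `j - i`. -/
theorem period_divides_shift {α : Type*} {m : ℕ} (p : Fin m → α) (q : ℕ)
    (hq1 : 1 ≤ q) (hq2 : q ≤ m / 2)
    (hper : ∀ k, ∀ hk : k < m, q ≤ k → ∀ h : k - q < m, p ⟨k, hk⟩ = p ⟨k - q, h⟩)
    (hleast : ∀ d, 1 ≤ d → d < q →
      ∃ k, ∃ hk : k < m, d ≤ k ∧ p ⟨k, hk⟩ ≠ p ⟨k - d, by omega⟩)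
    (t : ℕ → α) (i j : ℕ) (hi : Matches p t i) (hj : Matches p t j)
    (hij : i < j) (hdist : j - i ≤ m / 2) :
    q ∣ (j - i) := by
  set d := j - i with hd
  set f : ℕ → α := fun k => t (i + k) with hf
  have hfp : ∀ k (hk : k < m), f k = p ⟨k, hk⟩ := fun k hk => hi ⟨k, hk⟩
  have hfq : ∀ k, k < m → q ≤ k → f k = f (k - q) := by
    intro k hk hqk
    rw [hfp k hk, hfp (k - q) (by omega)]
    exact hper k hk hqk (by omega)
  have hfd : ∀ k, k < m → d ≤ k → f k = f (k - d) := by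
    intro k hk hdk
    have h1 : t (j + (k - d)) = p ⟨k - d, by omega⟩ := hj ⟨k - d, by omega⟩
    have h2 : t (i + (k - d)) = p ⟨k - d, by omega⟩ := hi ⟨k - d, by omega⟩
    show t (i + k) = t (i + (k - d))
    rw [show i + k = j + (k - d) from by omega, h1, h2]
  have hd1 : 1 ≤ d := by omega
  have hm : q + d ≤ m := by omega
  have hg := fine_wilf_aux m f (q + d) q d rfl hq1 hd1 hm hfq hfd
  set g := Nat.gcd q d with hgdef
  have hg1 : 0 < g := Nat.gcd_pos_of_pos_left d hq1
  have hgq : g ≤ q := Nat.le_of_dvd (by omega) (Nat.gcd_dvd_left q d)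
  have heq : g = q := by
    by_contra hne
    obtain ⟨k, hk, hgk, hne'⟩ := hleast g hg1 (by omega)
    exact hne' (by rw [← hfp k hk, ← hfp (k - g) (by omega)]; exact hg k hk hgk)
  exact heq ▸ Nat.gcd_dvd_right q d
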